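/- arXiv:2405.18705 — 5 statements merged into one kernel-verified Lean document; each statement's English description precedes it below -/
import Mathlib

section
/- Let s ∈ ℝⁿ with ‖s‖₁ > 1. Then min over x with ‖x‖₁ ≤ 1 of (‖x‖∞ - ⟨x, s⟩) is strictly negative. -/
open Finset

noncomputable def supNorm {n : ℕ} [NeZero n] (x : Fin n → ℝ) : ℝ :=
  Finset.univ.sup' Finset.univ_nonempty fun i => |x i|

lemma mySignMul (x : ℝ) : Real.sign x * x = |x| := by
  rcases lt_trichotomy x 0 with h | h | h
  · rw [Real.sign_of_neg h, abs_of_neg h]; ring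
  · simp [h]
  · rw [Real.sign_of_pos h, abs_of_pos h]; ring

lemma abs_sign_le (x : ℝ) : |Real.sign x| ≤ 1 := by
  rcases lt_trichotomy x 0 with h | h | h
  · rw [Real.sign_of_neg h]; norm_num
  · simp [h]
  · rw [Real.sign_of_pos h]; norm_num

/-- If ‖s‖₁ > 1 then the minimum of ‖x‖∞ - ⟨x,s⟩ over the ℓ¹ ball is strictly negative,
i.e. some feasible point has strictly negative objective value. -/
theorem stmt1 {n : ℕ} [NeZero n] (s : Fin n → ℝ) (hs : 1 < ∑ i, |s i|) :
    ∃ x : Fin n → ℝ, (∑ i, |x i| ≤ 1) ∧ supNorm x - ∑ i, x i * s i < 0 := by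
  have hn : (0 : ℝ) < n := by
    have := NeZero.pos n
    exact_mod_cast this
  refine ⟨fun i => Real.sign (s i) / n, ?_, ?_⟩
  · calc ∑ i, |Real.sign (s i) / (n : ℝ)| ≤ ∑ _i : Fin n, 1 / (n : ℝ) := by
          apply Finset.sum_le_sum
          intro i _
          rw [abs_div, abs_of_pos hn]
          exact div_le_div_of_nonneg_right (abs_sign_le _) hn.le
        _ = 1 := by
          rw [Finset.sum_const, Finset.card_univ, Fintype.card_fin, nsmul_eq_mul]
          field_simp
  · have h1 : supNorm (fun i => Real.sign (s i) / n) ≤ 1 / n := by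
      apply Finset.sup'_le
      intro i _
      rw [abs_div, abs_of_pos hn]
      exact div_le_div_of_nonneg_right (abs_sign_le _) hn.le
    have h2 : ∑ i, (Real.sign (s i) / n) * s i = (∑ i, |s i|) / n := by
      rw [Finset.sum_div]
      congr 1; ext i
      rw [div_mul_eq_mul_div, mySignMul]
    have h3 : 1 / (n : ℝ) < (∑ i, |s i|) / n := by
      exact (div_lt_div_iff_of_pos_right hn).mpr hs
    linarith
end

section
/- Consider the Dinkelbach iteration: given convex one-homogeneous f, g : ℝⁿ → ℝ with g > 0 on a compact set Ω ⊂ ℝⁿ \ {0}, define x^{k+1} ∈ argmin_{x∈Ω} (f(x) - r^k g(x)) and r^{k+1} = f(x^{k+1})/g(x^{k+1}). Then the sequence {r^k} is nonincreasing and converges to r_min = min_{x∈Ω} f(x)/g(x). -/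
open Finset Filter

theorem stmt7 {n : ℕ} (f g : (Fin n → ℝ) → ℝ)
    (hf : ConvexOn ℝ Set.univ f) (hg : ConvexOn ℝ Set.univ g)
    (hfh : ∀ t : ℝ, 0 ≤ t → ∀ x : Fin n → ℝ, f (t • x) = t * f x)
    (hgh : ∀ t : ℝ, 0 ≤ t → ∀ x : Fin n → ℝ, g (t • x) = t * g x)
    (Ω : Set (Fin n → ℝ)) (hΩc : IsCompact Ω) (hΩne : Ω.Nonempty)
    (hΩ0 : (0 : Fin n → ℝ) ∉ Ω)
    (hgpos : ∀ x ∈ Ω, 0 < g x)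
    (x : ℕ → Fin n → ℝ) (r : ℕ → ℝ)
    (hx0 : x 0 ∈ Ω) (hr0 : r 0 = f (x 0) / g (x 0))
    (hstep : ∀ k, x (k + 1) ∈ Ω ∧
      ∀ y ∈ Ω, f (x (k + 1)) - r k * g (x (k + 1)) ≤ f y - r k * g y)
    (hrk : ∀ k, r (k + 1) = f (x (k + 1)) / g (x (k + 1))) :
    Antitone r ∧
    Tendsto r atTop (nhds (sInf ((fun z => f z / g z) '' Ω))) := by
  -- continuity
  have hfc : ContinuousOn f Ω :=
    ((hf.continuousOn isOpen_univ).mono (Set.subset_univ Ω))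
  have hgc : ContinuousOn g Ω :=
    ((hg.continuousOn isOpen_univ).mono (Set.subset_univ Ω))
  have hratc : ContinuousOn (fun z => f z / g z) Ω :=
    hfc.div hgc (fun z hz => (hgpos z hz).ne')
  -- membership and ratio identity
  have hmem : ∀ k, x k ∈ Ω := by
    intro k; induction k with
    | zero => exact hx0
    | succ k ih => exact (hstep k).1
  have hrat : ∀ k, r k = f (x k) / g (x k) := by
    intro k; cases k with
    | zero => exact hr0
    | succ k => exact hrk k
  have hfr : ∀ k, f (x k) = r k * g (x k) := by
    intro k
    rw [hrat k, div_mul_cancel₀]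
    exact (hgpos _ (hmem k)).ne'
  -- antitone
  have hstep' : ∀ k, r (k + 1) ≤ r k := by
    intro k
    have h := (hstep k).2 (x k) (hmem k)
    rw [← hfr k, sub_self] at h
    have hgp := hgpos _ (hmem (k + 1))
    rw [hrk k, div_le_iff₀ hgp]
    linarith
  have hanti : Antitone r := antitone_nat_of_succ_le hstep'
  -- minimizer of the ratio
  obtain ⟨z, hzΩ, hzmin⟩ := hΩc.exists_isMinOn hΩne hratc
  set R := f z / g z with hR
  have hlb : ∀ w ∈ (fun z => f z / g z) '' Ω, R ≤ w := by
    rintro w ⟨y, hy, rfl⟩; exact hzmin hy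
  have hbdd : BddBelow ((fun z => f z / g z) '' Ω) := ⟨R, hlb⟩
  have hsInf : sInf ((fun z => f z / g z) '' Ω) = R :=
    le_antisymm (csInf_le hbdd ⟨z, hzΩ, rfl⟩) (le_csInf (hΩne.image _) hlb)
  -- lower bound on r
  have hrlb : ∀ k, R ≤ r k := by
    intro k; rw [hrat k]; exact hzmin (hmem k)
  -- convergence of r
  have hbddr : BddBelow (Set.range r) := ⟨R, by rintro _ ⟨k, rfl⟩; exact hrlb k⟩
  set L := ⨅ k, r k with hL
  have htend : Tendsto r atTop (nhds L) := tendsto_atTop_ciInf hanti hbddr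
  have hLlb : ∀ k, L ≤ r k := fun k => ciInf_le hbddr k
  have hRL : R ≤ L := le_ciInf hrlb
  -- show L ≤ R by contradiction
  have hLR : L ≤ R := by
    by_contra hcon
    push_neg at hcon
    -- upper bound M for g on Ω
    obtain ⟨m, hmΩ, hmmax⟩ := hΩc.exists_isMaxOn hΩne hgc
    set M := g m with hM
    have hMpos : 0 < M := hgpos m hmΩ
    have hgz : 0 < g z := hgpos z hzΩ
    set ε := (L - R) * g z / M with hε
    have hεpos : 0 < ε := by
      apply div_pos _ hMpos
      exact mul_pos (by linarith) hgz
    have hdec : ∀ k, r (k + 1) ≤ r k - ε := by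
      intro k
      have h := (hstep k).2 z hzΩ
      have hfz : f z = R * g z := by
        rw [hR, div_mul_cancel₀]; exact hgz.ne'
      have hgk : 0 < g (x (k + 1)) := hgpos _ (hmem (k + 1))
      have hgkM : g (x (k + 1)) ≤ M := hmmax (hmem (k + 1))
      have hfk : f (x (k + 1)) = r (k + 1) * g (x (k + 1)) := hfr (k + 1)
      rw [hfk, hfz] at h
      -- (r(k+1) - r k) * g(x(k+1)) ≤ (R - r k) * g z
      have h1 : (r (k + 1) - r k) * g (x (k + 1)) ≤ (R - r k) * g z := by ring_nf; ring_nf at h; linarith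
      have h2 : (R - r k) * g z ≤ (R - L) * g z := by
        apply mul_le_mul_of_nonneg_right _ hgz.le
        have := hLlb k; linarith
      have h3 : (r (k + 1) - r k) * g (x (k + 1)) ≤ (R - L) * g z := h1.trans h2
      have h4 : (r k - r (k + 1)) * g (x (k + 1)) ≥ (L - R) * g z := by nlinarith
      have h5 : (r k - r (k + 1)) * M ≥ (L - R) * g z := by
        refine le_trans h4 ?_
        apply mul_le_mul_of_nonneg_left hgkM
        nlinarith [hstep' k]
      have h6 : ε ≤ r k - r (k + 1) := by
        rw [hε, div_le_iff₀ hMpos]; linarith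
      linarith
    have hlin : ∀ k : ℕ, r k ≤ r 0 - k * ε := by
      intro k; induction k with
      | zero => simp
      | succ k ih =>
        have := hdec k
        push_cast
        nlinarith
    obtain ⟨N, hN⟩ := exists_nat_gt ((r 0 - R) / ε)
    have h6 : (r 0 - R) < N * ε := by
      rwa [div_lt_iff₀ hεpos] at hN
    have := hlin N
    have := hrlb N
    linarith
  have hLeq : L = R := le_antisymm hLR hRL
  rw [hsInf, ← hLeq]
  exact ⟨hanti, htend⟩
end

section
/- Let s ∈ ℝⁿ with coordinates sorted so that |s_1| ≥ … ≥ |s_n|, and for 1 ≤ m ≤ n let x^{(m)} = (1/m)(sign(s_1),…,sign(s_m),0,…,0). Then min over x with ‖x‖₁ ≤ 1 of (‖x‖∞ - ⟨x, s⟩) equals min(0, min_{1≤m≤n} (1 - Σ_{i=1}^m |s_i|)/m). -/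
open Finset

lemma card_filter_lt' {n : ℕ} (m : ℕ) (h : m ≤ n) :
    (univ.filter fun i : Fin n => (i : ℕ) < m).card = m := by
  have : (univ.filter fun i : Fin n => (i : ℕ) < m) = Finset.map (Fin.castLEEmb h) univ := by
    ext i
    simp only [mem_filter, mem_univ, true_and, Finset.mem_map, Fin.castLEEmb_apply]
    constructor
    · intro hi; exact ⟨⟨i, hi⟩, by ext; simp⟩
    · rintro ⟨j, rfl⟩; exact j.isLt
  rw [this, Finset.card_map, card_univ, Fintype.card_fin]

lemma mem_set_cm {n : ℕ} [NeZero n] (s : Fin n → ℝ) (m : ℕ) (hm : m ∈ Finset.Icc 1 n) :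
    ((1 - ∑ i ∈ univ.filter (fun i : Fin n => (i : ℕ) < m), |s i|) / m) ∈
      {v : ℝ | ∃ x : Fin n → ℝ, (∑ i, |x i| ≤ 1) ∧ v = supNorm x - ∑ i, x i * s i} := by
  classical
  obtain ⟨hm1, hmn⟩ := Finset.mem_Icc.mp hm
  have hmpos : (0:ℝ) < m := by exact_mod_cast hm1
  have hinv : |((m:ℝ))⁻¹| = (m:ℝ)⁻¹ := abs_of_pos (inv_pos.mpr hmpos)
  have hneg : |(-1:ℝ)/m| = (m:ℝ)⁻¹ := by
    rw [abs_div, abs_neg, abs_one, abs_of_pos hmpos, one_div]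
  refine ⟨fun i => if (i : ℕ) < m then (if 0 ≤ s i then (1:ℝ) else -1) / m else 0, ?_, ?_⟩
  · have habs : ∀ i : Fin n,
        |if (i : ℕ) < m then (if 0 ≤ s i then (1:ℝ) else -1) / m else 0|
          = if (i : ℕ) < m then (m:ℝ)⁻¹ else 0 := by
      intro i
      by_cases h : (i : ℕ) < m
      · by_cases h2 : 0 ≤ s i <;> simp [h, h2, hinv, hneg]
      · simp [h]
    simp only [habs]
    rw [← Finset.sum_filter, Finset.sum_const, card_filter_lt' m hmn, nsmul_eq_mul]
    rw [mul_inv_cancel₀ (ne_of_gt hmpos)]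
  · have hsup : supNorm (fun i => if (i : ℕ) < m then (if 0 ≤ s i then (1:ℝ) else -1) / m else 0)
        = (m:ℝ)⁻¹ := by
      apply le_antisymm
      · apply Finset.sup'_le
        intro i _
        by_cases h : (i : ℕ) < m
        · by_cases h2 : 0 ≤ s i <;> simp [h, h2, hinv, hneg]
        · simp only [h, if_false, abs_zero]; positivity
      · have h0n : (0:ℕ) < n := Nat.pos_of_ne_zero (NeZero.ne n)
        have h0m : ((⟨0, h0n⟩ : Fin n) : ℕ) < m := hm1
        have hval : |(fun i : Fin n => if (i : ℕ) < m
              then (if 0 ≤ s i then (1:ℝ) else -1) / m else 0) ⟨0, h0n⟩| = (m:ℝ)⁻¹ := by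
          by_cases h2 : 0 ≤ s 0 <;> simp [h0m, h2, hinv, hneg]
        calc (m:ℝ)⁻¹ = _ := hval.symm
          _ ≤ _ := Finset.le_sup'
              (fun i => |(fun i : Fin n => if (i : ℕ) < m
                then (if 0 ≤ s i then (1:ℝ) else -1) / m else 0) i|) (Finset.mem_univ ⟨0, h0n⟩)
    rw [hsup]
    have hprod : ∀ i : Fin n,
        (if (i : ℕ) < m then (if 0 ≤ s i then (1:ℝ) else -1) / m else 0) * s i
          = if (i : ℕ) < m then |s i| / m else 0 := by
      intro i
      by_cases h : (i : ℕ) < m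
      · by_cases h2 : 0 ≤ s i
        · simp [h, h2, abs_of_nonneg h2, inv_mul_eq_div]
        · simp only [h, h2, if_true, if_false, abs_of_neg (lt_of_not_ge h2),
            div_mul_eq_mul_div, neg_mul, one_mul, neg_div]
      · simp [h]
    simp only [hprod]
    rw [← Finset.sum_filter, ← Finset.sum_div]
    rw [sub_div, one_div]

lemma key_sum {n : ℕ} (s : Fin n → ℝ) (hsort : ∀ i j : Fin n, i ≤ j → |s j| ≤ |s i|)
    (R : ℝ)
    (hRc : ∀ m ∈ Finset.Icc 1 n,
      R ≤ (1 - ∑ i ∈ univ.filter (fun i : Fin n => (i : ℕ) < m), |s i|) / m) :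
    ∑ i, max (|s i| + R) 0 ≤ 1 := by
  classical
  set T := univ.filter (fun i : Fin n => 0 ≤ |s i| + R) with hT
  have hsum : ∑ i, max (|s i| + R) 0 = ∑ i ∈ T, (|s i| + R) := by
    rw [hT, Finset.sum_filter]
    refine Finset.sum_congr rfl fun i _ => ?_
    by_cases h : 0 ≤ |s i| + R
    · simp [h, max_eq_left h]
    · simp [h, max_eq_right (le_of_not_ge h)]
  rw [hsum]
  rcases T.eq_empty_or_nonempty with hTe | hTne
  · simp [hTe]
  · set k := T.max' hTne with hk
    have hkT : k ∈ T := T.max'_mem hTne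
    have hkpos : 0 ≤ |s k| + R := by
      rw [hT] at hkT; exact (mem_filter.mp hkT).2
    have hTeq : T = univ.filter (fun i : Fin n => (i : ℕ) < (k : ℕ) + 1) := by
      ext i
      simp only [hT, mem_filter, mem_univ, true_and]
      constructor
      · intro hi
        have : i ≤ k := T.le_max' i (by rw [hT]; simp [hi])
        exact Nat.lt_succ_of_le this
      · intro hi
        have hik : i ≤ k := Fin.le_def.mpr (Nat.lt_succ_iff.mp hi)
        have := hsort i k hik
        linarith
    set m := (k : ℕ) + 1 with hm
    have hmIcc : m ∈ Finset.Icc 1 n := by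
      simp [hm, Nat.succ_le_iff, k.isLt]
    have hcard : T.card = m := by
      rw [hTeq, card_filter_lt' m (by exact k.isLt)]
    have hsplit : ∑ i ∈ T, (|s i| + R) =
        (∑ i ∈ univ.filter (fun i : Fin n => (i : ℕ) < m), |s i|) + m * R := by
      rw [Finset.sum_add_distrib, Finset.sum_const, hcard, ← hTeq, nsmul_eq_mul]
    rw [hsplit]
    have hRm := hRc m hmIcc
    have hmpos : (0:ℝ) < m := by positivity
    rw [le_div_iff₀ hmpos] at hRm
    nlinarith

/-- Closed-form value of the inner subproblem: for `s` sorted by decreasing absolute value,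
`min_{‖x‖₁ ≤ 1} (‖x‖∞ - ⟨x,s⟩) = min(0, min_{1 ≤ m ≤ n} (1 - ∑_{i=1}^m |s_i|)/m)`. -/
theorem stmt11 {n : ℕ} [NeZero n] (s : Fin n → ℝ)
    (hsort : ∀ i j : Fin n, i ≤ j → |s j| ≤ |s i|) :
    sInf {v : ℝ | ∃ x : Fin n → ℝ, (∑ i, |x i| ≤ 1) ∧ v = supNorm x - ∑ i, x i * s i}
      = min 0 ((Finset.Icc 1 n).inf'
          (Finset.nonempty_Icc.mpr (Nat.one_le_iff_ne_zero.mpr (NeZero.ne n)))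
          (fun m => (1 - ∑ i ∈ Finset.univ.filter (fun i : Fin n => (i : ℕ) < m), |s i|) / m)) := by
  classical
  set ne1 : (Finset.Icc 1 n).Nonempty :=
    (Finset.nonempty_Icc.mpr (Nat.one_le_iff_ne_zero.mpr (NeZero.ne n))) with hne1
  set f : ℕ → ℝ :=
    fun m => (1 - ∑ i ∈ Finset.univ.filter (fun i : Fin n => (i : ℕ) < m), |s i|) / m with hf
  set R : ℝ := min 0 ((Finset.Icc 1 n).inf' ne1 f) with hR
  have hR0 : R ≤ 0 := min_le_left _ _
  have hRc : ∀ m ∈ Finset.Icc 1 n, R ≤ f m := fun m hm =>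
    le_trans (min_le_right _ _) (Finset.inf'_le f hm)
  have hkey : ∑ i, max (|s i| + R) 0 ≤ 1 := key_sum s hsort R hRc
  refine IsLeast.csInf_eq ⟨?_, ?_⟩
  · -- membership
    rcases le_total ((Finset.Icc 1 n).inf' ne1 f) 0 with h | h
    · obtain ⟨m0, hm0, hEq⟩ := Finset.exists_mem_eq_inf' ne1 f
      rw [hR] at *
      rw [min_eq_right h, hEq]
      exact mem_set_cm s m0 hm0
    · rw [hR, min_eq_left h]
      refine ⟨fun _ => 0, by simp, ?_⟩
      simp [supNorm]
  · -- lower bound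
    rintro v ⟨x, hx1, rfl⟩
    have hti : ∀ i, |x i| ≤ supNorm x := fun i => Finset.le_sup' (fun i => |x i|) (mem_univ i)
    have ht0 : 0 ≤ supNorm x := by
      have h0n : (0:ℕ) < n := Nat.pos_of_ne_zero (NeZero.ne n)
      exact le_trans (abs_nonneg (x ⟨0, h0n⟩)) (hti ⟨0, h0n⟩)
    have hx0 : 0 ≤ ∑ i, |x i| := Finset.sum_nonneg fun i _ => abs_nonneg _
    have h1 : ∑ i, x i * s i ≤ ∑ i, |x i| * |s i| :=
      Finset.sum_le_sum fun i _ => (le_abs_self _).trans_eq (abs_mul _ _)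
    have h2 : ∑ i, |x i| * (|s i| + R) = ∑ i, |x i| * |s i| + R * ∑ i, |x i| := by
      simp only [mul_add]
      rw [Finset.sum_add_distrib, Finset.mul_sum]
      exact congrArg _ (Finset.sum_congr rfl fun i _ => mul_comm _ _)
    have h3 : ∑ i, |x i| * (|s i| + R) ≤ ∑ i, supNorm x * max (|s i| + R) 0 := by
      refine Finset.sum_le_sum fun i _ => ?_
      rcases le_total 0 (|s i| + R) with hp | hp
      · rw [max_eq_left hp]
        exact mul_le_mul_of_nonneg_right (hti i) hp
      · rw [max_eq_right hp]
        rw [mul_zero]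
        exact mul_nonpos_of_nonneg_of_nonpos (abs_nonneg _) hp
    have h4 : ∑ i, supNorm x * max (|s i| + R) 0 ≤ supNorm x := by
      rw [← Finset.mul_sum]
      calc supNorm x * ∑ i, max (|s i| + R) 0 ≤ supNorm x * 1 :=
            mul_le_mul_of_nonneg_left hkey ht0
        _ = supNorm x := mul_one _
    have h5 : R ≤ R * ∑ i, |x i| := by nlinarith
    linarith
end

section
/- Let s ∈ ℝⁿ with ‖s‖₁ = 1. Then the minimum of ‖x‖∞ - ⟨x,s⟩ over ‖x‖₁ ≤ 1 is 0, and x attains this minimum if and only if x_i s_i ≥ 0 for all i and |x_i| = ‖x‖∞ whenever s_i ≠ 0. -/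
open Finset

theorem abs_le_supNorm' {n : ℕ} [NeZero n] (x : Fin n → ℝ) (i : Fin n) :
    |x i| ≤ supNorm x := Finset.le_sup' (fun j => |x j|) (Finset.mem_univ i)

theorem supNorm_nonneg' {n : ℕ} [NeZero n] (x : Fin n → ℝ) : 0 ≤ supNorm x :=
  (abs_nonneg _).trans (abs_le_supNorm' x ⟨0, Nat.pos_of_ne_zero (NeZero.ne n)⟩)

theorem stmt12 {n : ℕ} [NeZero n] (s : Fin n → ℝ) (hs : ∑ i, |s i| = 1) :
    IsLeast {v : ℝ | ∃ x : Fin n → ℝ, (∑ i, |x i| ≤ 1) ∧ v = supNorm x - ∑ i, x i * s i} 0 ∧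
    ∀ x : Fin n → ℝ, (∑ i, |x i| ≤ 1) →
      (supNorm x - ∑ i, x i * s i = 0 ↔
        (∀ i, 0 ≤ x i * s i) ∧ ∀ i, s i ≠ 0 → |x i| = supNorm x) := by
  have key : ∀ (x : Fin n → ℝ) (i : Fin n), x i * s i ≤ supNorm x * |s i| := by
    intro x i
    calc x i * s i ≤ |x i * s i| := le_abs_self _
      _ = |x i| * |s i| := abs_mul _ _
      _ ≤ supNorm x * |s i| :=
          mul_le_mul_of_nonneg_right (abs_le_supNorm' x i) (abs_nonneg _)
  have sumkey : ∀ x : Fin n → ℝ, ∑ i, x i * s i ≤ supNorm x := by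
    intro x
    calc ∑ i, x i * s i ≤ ∑ i, supNorm x * |s i| :=
          Finset.sum_le_sum fun i _ => key x i
      _ = supNorm x * ∑ i, |s i| := by rw [Finset.mul_sum]
      _ = supNorm x := by rw [hs, mul_one]
  constructor
  · constructor
    · exact ⟨0, by simp, by simp [supNorm]⟩
    · rintro v ⟨x, hx, rfl⟩
      linarith [sumkey x]
  · intro x hx
    have h1 : supNorm x - ∑ i, x i * s i = ∑ i, (supNorm x * |s i| - x i * s i) := by
      rw [Finset.sum_sub_distrib, ← Finset.mul_sum, hs, mul_one]
    rw [h1, Finset.sum_eq_zero_iff_of_nonneg (fun i _ => sub_nonneg.2 (key x i))]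
    constructor
    · intro h
      have heq : ∀ i, x i * s i = supNorm x * |s i| := fun i => by
        have := h i (Finset.mem_univ i); linarith
      refine ⟨fun i => ?_, fun i hsi => ?_⟩
      · rw [heq i]; exact mul_nonneg (supNorm_nonneg' x) (abs_nonneg _)
      · have hsp : 0 < |s i| := abs_pos.2 hsi
        have h2 : |x i| * |s i| = supNorm x * |s i| := by
          have ha : x i * s i ≤ |x i| * |s i| := by
            rw [← abs_mul]; exact le_abs_self _
          have hb : |x i| * |s i| ≤ supNorm x * |s i| :=
            mul_le_mul_of_nonneg_right (abs_le_supNorm' x i) (abs_nonneg _)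
          have := heq i
          linarith
        exact mul_right_cancel₀ hsp.ne' h2
    · rintro ⟨h1, h2⟩ i _
      by_cases hsi : s i = 0
      · simp [hsi]
      · have hx2 : x i * s i = |x i| * |s i| := by
          rw [← abs_mul]; exact (abs_of_nonneg (h1 i)).symm
        rw [hx2, h2 i hsi, sub_self]
end

section
/- Let μ_i > 0 and α be a weighted median of x (i.e., α ∈ argmin_c Σ_i μ_i|x_i - c|). Then v ∈ ℝⁿ is a subgradient of N(x) = min_c Σ_i μ_i|x_i - c| at x if and only if v_i = μ_i·sign(x_i - α) for all i with x_i ≠ α, v_i ∈ [-μ_i, μ_i] for all i with x_i = α, and Σ_i v_i = 0 when x is such that the weighted median set has nonempty interior; in particular any subgradient v satisfies Σ_{x_i<α} μ_i - Σ_{x_i>α} μ_i - Σ_{x_i=α} μ_i ≤ Σ_{i: x_i=α} v_i ≤ Σ_{x_i<α} μ_i - Σ_{x_i>α} μ_i + Σ_{x_i=α} μ_i. -/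
open Finset

/-- `N(x) = min_{c ∈ ℝ} ∑ᵢ μᵢ |xᵢ - c|`. -/
noncomputable def Nfun {n : ℕ} (μ : Fin n → ℝ) (x : Fin n → ℝ) : ℝ :=
  ⨅ c : ℝ, ∑ i, μ i * |x i - c|

/-- `v` is a subgradient of `f` at `x`. -/
def SubgradientAt {n : ℕ} (f : (Fin n → ℝ) → ℝ) (x v : Fin n → ℝ) : Prop :=
  ∀ y : Fin n → ℝ, f x + ∑ i, (y i - x i) * v i ≤ f y

lemma Nfun_le {n : ℕ} (μ : Fin n → ℝ) (hμ : ∀ i, 0 < μ i) (x : Fin n → ℝ) (c : ℝ) :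
    Nfun μ x ≤ ∑ i, μ i * |x i - c| := by
  refine ciInf_le ⟨0, ?_⟩ c
  rintro y ⟨d, rfl⟩
  exact Finset.sum_nonneg fun i _ => mul_nonneg (hμ i).le (abs_nonneg _)

theorem stmt14 {n : ℕ} [NeZero n] (μ : Fin n → ℝ) (hμ : ∀ i, 0 < μ i)
    (x : Fin n → ℝ) (α : ℝ)
    (hα : ∀ c : ℝ, ∑ i, μ i * |x i - α| ≤ ∑ i, μ i * |x i - c|)
    (v : Fin n → ℝ) :
    (SubgradientAt (Nfun μ) x v ↔
      (∀ i, α < x i → v i = μ i) ∧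
      (∀ i, x i < α → v i = -μ i) ∧
      (∀ i, x i = α → |v i| ≤ μ i) ∧
      (∑ i, v i = 0)) ∧
    (SubgradientAt (Nfun μ) x v →
      ((∑ i ∈ Finset.univ.filter (fun i => x i < α), μ i)
          - (∑ i ∈ Finset.univ.filter (fun i => α < x i), μ i)
          - (∑ i ∈ Finset.univ.filter (fun i => x i = α), μ i)
        ≤ ∑ i ∈ Finset.univ.filter (fun i => x i = α), v i) ∧
      (∑ i ∈ Finset.univ.filter (fun i => x i = α), v i
        ≤ (∑ i ∈ Finset.univ.filter (fun i => x i < α), μ i)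
          - (∑ i ∈ Finset.univ.filter (fun i => α < x i), μ i)
          + (∑ i ∈ Finset.univ.filter (fun i => x i = α), μ i))) := by
  have hNx : Nfun μ x = ∑ i, μ i * |x i - α| :=
    le_antisymm (Nfun_le μ hμ x α) (le_ciInf hα)
  have hiff : SubgradientAt (Nfun μ) x v ↔
      (∀ i, α < x i → v i = μ i) ∧
      (∀ i, x i < α → v i = -μ i) ∧
      (∀ i, x i = α → |v i| ≤ μ i) ∧
      (∑ i, v i = 0) := by
    constructor
    · intro hsub
      -- key perturbation inequality
      have key : ∀ (j : Fin n) (t : ℝ),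
          t * v j ≤ μ j * |x j + t - α| - μ j * |x j - α| := by
        intro j t
        have h1 := hsub (Function.update x j (x j + t))
        have hlin : ∑ i, (Function.update x j (x j + t) i - x i) * v i = t * v j := by
          rw [Finset.sum_eq_single j]
          · simp
          · intro i _ hij
            simp [Function.update_of_ne hij]
          · simp
        have h2 : Nfun μ (Function.update x j (x j + t))
            ≤ ∑ i, μ i * |x i - α| + (μ j * |x j + t - α| - μ j * |x j - α|) := by
          refine (Nfun_le μ hμ _ α).trans_eq ?_
          have : ∑ i, μ i * |Function.update x j (x j + t) i - α|
              - ∑ i, μ i * |x i - α| = μ j * |x j + t - α| - μ j * |x j - α| := by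
            rw [← Finset.sum_sub_distrib, Finset.sum_eq_single j]
            · simp
            · intro i _ hij
              simp [Function.update_of_ne hij]
            · simp
          linarith
        rw [hlin, hNx] at h1
        linarith
      refine ⟨?_, ?_, ?_, ?_⟩
      · intro i hi
        set ε := (x i - α) / 2 with hε
        have hε0 : 0 < ε := by simp [hε]; linarith
        have k1 := key i ε
        have k2 := key i (-ε)
        rw [show |x i + ε - α| = 3 * ε by rw [abs_of_pos] <;> [skip; linarith] ; simp [hε]; ring,
          show |x i - α| = 2 * ε by rw [abs_of_pos] <;> [skip; linarith]; simp [hε]; ring] at k1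
        rw [show |x i + -ε - α| = ε by rw [abs_of_pos] <;> [skip; linarith]; simp [hε]; ring,
          show |x i - α| = 2 * ε by rw [abs_of_pos] <;> [skip; linarith]; simp [hε]; ring] at k2
        nlinarith [k1, k2, hε0]
      · intro i hi
        set ε := (α - x i) / 2 with hε
        have hε0 : 0 < ε := by simp [hε]; linarith
        have k1 := key i ε
        have k2 := key i (-ε)
        rw [show |x i + ε - α| = ε by rw [abs_of_neg] <;> [skip; linarith]; simp [hε]; ring,
          show |x i - α| = 2 * ε by rw [abs_of_neg] <;> [skip; linarith]; simp [hε]; ring] at k1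
        rw [show |x i + -ε - α| = 3 * ε by rw [abs_of_neg] <;> [skip; linarith]; simp [hε]; ring,
          show |x i - α| = 2 * ε by rw [abs_of_neg] <;> [skip; linarith]; simp [hε]; ring] at k2
        nlinarith [k1, k2, hε0]
      · intro i hi
        have k1 := key i 1
        have k2 := key i (-1)
        rw [hi] at k1 k2
        simp only [sub_self, abs_zero, mul_zero, sub_zero] at k1 k2
        rw [show |α + 1 - α| = 1 by rw [abs_of_pos] <;> [ring; linarith]] at k1
        rw [show |α + -1 - α| = 1 by rw [abs_of_neg] <;> [ring; linarith]] at k2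
        rw [abs_le]
        constructor <;> nlinarith [hμ i]
      · have shift : ∀ t : ℝ, t * ∑ i, v i ≤ 0 := by
          intro t
          have h1 := hsub (fun i => x i + t)
          have hlin : ∑ i, (x i + t - x i) * v i = t * ∑ i, v i := by
            rw [Finset.mul_sum]
            exact Finset.sum_congr rfl fun i _ => by ring
          have h2 : Nfun μ (fun i => x i + t) ≤ ∑ i, μ i * |x i - α| := by
            refine (Nfun_le μ hμ _ (α + t)).trans_eq ?_
            exact Finset.sum_congr rfl fun i _ => by ring_nf
          rw [hlin, hNx] at h1
          linarith
        have s1 := shift 1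
        have s2 := shift (-1)
        linarith
    · rintro ⟨h1, h2, h3, h4⟩ y
      rw [hNx]
      refine le_ciInf fun c => ?_
      have hvabs : ∀ i, |v i| ≤ μ i := by
        intro i
        rcases lt_trichotomy (x i) α with h | h | h
        · rw [h2 i h, abs_neg, abs_of_pos (hμ i)]
        · exact h3 i h
        · rw [h1 i h, abs_of_pos (hμ i)]
      have ha : ∑ i, (x i - α) * v i = ∑ i, μ i * |x i - α| := by
        refine Finset.sum_congr rfl fun i _ => ?_
        rcases lt_trichotomy (x i) α with h | h | h
        · rw [h2 i h, abs_of_neg (by linarith : x i - α < 0)]; ring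
        · simp [h]
        · rw [h1 i h, abs_of_pos (by linarith : 0 < x i - α)]; ring
      have hb : ∑ i, (y i - c) * v i ≤ ∑ i, μ i * |y i - c| := by
        refine Finset.sum_le_sum fun i _ => ?_
        calc (y i - c) * v i ≤ |(y i - c) * v i| := le_abs_self _
          _ = |y i - c| * |v i| := abs_mul _ _
          _ ≤ |y i - c| * μ i := by
              exact mul_le_mul_of_nonneg_left (hvabs i) (abs_nonneg _)
          _ = μ i * |y i - c| := mul_comm _ _
      have hsplit : ∑ i, (y i - x i) * v i
          = ∑ i, (y i - c) * v i - ∑ i, (x i - α) * v i + (c - α) * ∑ i, v i := by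
        rw [Finset.mul_sum, ← Finset.sum_sub_distrib, ← Finset.sum_add_distrib]
        exact Finset.sum_congr rfl fun i _ => by ring
      rw [hsplit, h4, mul_zero, ha] at *
      linarith
  refine ⟨hiff, fun hsub => ?_⟩
  obtain ⟨h1, h2, h3, h4⟩ := hiff.mp hsub
  have hunion : Finset.univ.filter (fun i => ¬ x i = α)
      = Finset.univ.filter (fun i => x i < α) ∪ Finset.univ.filter (fun i => α < x i) := by
    ext i
    simp only [Finset.mem_filter, Finset.mem_union, Finset.mem_univ, true_and]
    constructor
    · intro h; exact lt_or_gt_of_ne h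
    · rintro (h | h) <;> [exact ne_of_lt h; exact ne_of_gt h]
  have hdisj : Disjoint (Finset.univ.filter (fun i => x i < α))
      (Finset.univ.filter (fun i => α < x i)) := by
    rw [Finset.disjoint_left]
    intro i hi hi'
    simp only [Finset.mem_filter] at hi hi'
    linarith [hi.2, hi'.2]
  have hsum : (∑ i ∈ Finset.univ.filter (fun i => x i = α), v i)
      + ((∑ i ∈ Finset.univ.filter (fun i => x i < α), v i)
        + (∑ i ∈ Finset.univ.filter (fun i => α < x i), v i)) = 0 := by
    rw [← Finset.sum_union hdisj, ← hunion,
      Finset.sum_filter_add_sum_filter_not Finset.univ (fun i => x i = α) v]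
    exact h4
  have hlt : ∑ i ∈ Finset.univ.filter (fun i => x i < α), v i
      = -∑ i ∈ Finset.univ.filter (fun i => x i < α), μ i := by
    rw [← Finset.sum_neg_distrib]
    refine Finset.sum_congr rfl fun i hi => ?_
    simp only [Finset.mem_filter] at hi
    exact h2 i hi.2
  have hgt : ∑ i ∈ Finset.univ.filter (fun i => α < x i), v i
      = ∑ i ∈ Finset.univ.filter (fun i => α < x i), μ i := by
    refine Finset.sum_congr rfl fun i hi => ?_
    simp only [Finset.mem_filter] at hi
    exact h1 i hi.2
  have hBnn : 0 ≤ ∑ i ∈ Finset.univ.filter (fun i => x i = α), μ i :=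
    Finset.sum_nonneg fun i _ => (hμ i).le
  rw [hlt, hgt] at hsum
  constructor <;> linarith
end
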